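/- Let Σ be a finite alphabet, let P_1, …, P_k and Q_1, …, Q_k be n-dimensional product distributions over Σ, let w_1, …, w_k and v_1, …, v_k be nonnegative weights each summing to 1, and let P = Σ_i w_i P_i and Q = Σ_i v_i Q_i be the corresponding mixtures. Fix 1 ≤ j < n, and for x ∈ Σ^j define u_j(x) ∈ ℝ^{2k} by u_j(x)_i = w_i P_i^{≤j}(x) and u_j(x)_{k+i} = −v_i Q_i^{≤j}(x) for 1 ≤ i ≤ k. Suppose S ⊆ Σ^j is a set of assignments such that {u_j(x) : x ∈ S} spans the same subspace of ℝ^{2k} as {u_j(x) : x ∈ Σ^j}. If P^{≤j+1}(x,y) = Q^{≤j+1}(x,y) for every x ∈ S and every y ∈ Σ, then P^{≤j+1}(x,y) = Q^{≤j+1}(x,y) for every x ∈ Σ^j and every y ∈ Σ. -/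
import Mathlib


open Finset

/-- The coefficient vector `u_j(x) ∈ ℝ^{2k}` associated with weighted product
distributions: coordinate `i ≤ k` is `w_i P_i^{≤j}(x)` and coordinate `k+i` is
`−v_i Q_i^{≤j}(x)`, where `P_i^{≤j}(x) = ∏_{t=1}^j p_{i,t}(x_t)`. -/
noncomputable def uVec {A : Type*} {k n : ℕ}
    (p q : Fin k → Fin n → A → ℝ) (w v : Fin k → ℝ)
    (j : ℕ) (hjn : j ≤ n) (x : Fin j → A) : (Fin k ⊕ Fin k) → ℝ :=
  Sum.elim (fun i => w i * ∏ t : Fin j, p i (Fin.castLE hjn t) (x t))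
           (fun i => -(v i * ∏ t : Fin j, q i (Fin.castLE hjn t) (x t)))

/-- The prefix marginal on the first `j` coordinates of the mixture with weights `w`
of the product distributions with factor distributions `p i`:
`P^{≤j}(x) = Σ_i w_i ∏_{t=1}^j p_{i,t}(x_t)`. -/
noncomputable def mixMarg {A : Type*} {k n : ℕ}
    (p : Fin k → Fin n → A → ℝ) (w : Fin k → ℝ)
    (j : ℕ) (hjn : j ≤ n) (x : Fin j → A) : ℝ :=
  ∑ i, w i * ∏ t : Fin j, p i (Fin.castLE hjn t) (x t)

/-- if `{u_j(x) : x ∈ S}` spans the same subspace of `ℝ^{2k}` as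
`{u_j(x) : x ∈ Σ^j}`, and the `(j+1)`-st prefix marginals of the two mixtures agree on
all `(x, y)` with `x ∈ S`, `y ∈ Σ`, then they agree on all of `Σ^{j+1}`. -/
theorem mixture_marginals_eq_of_eq_on_spanning_set
    (A : Type*) [Fintype A] (k n : ℕ)
    (p q : Fin k → Fin n → A → ℝ)
    (hp : ∀ i t, (∀ a, 0 ≤ p i t a) ∧ (∑ a, p i t a = 1))
    (hq : ∀ i t, (∀ a, 0 ≤ q i t a) ∧ (∑ a, q i t a = 1))
    (w v : Fin k → ℝ)
    (hw0 : ∀ i, 0 ≤ w i) (hw1 : ∑ i, w i = 1)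
    (hv0 : ∀ i, 0 ≤ v i) (hv1 : ∑ i, v i = 1)
    (j : ℕ) (hj1 : 1 ≤ j) (hjn : j + 1 ≤ n)
    (S : Set (Fin j → A))
    (hspan : Submodule.span ℝ (uVec p q w v j (by omega : j ≤ n) '' S)
           = Submodule.span ℝ (Set.range (uVec p q w v j (by omega : j ≤ n))))
    (hS : ∀ x ∈ S, ∀ y : A,
      mixMarg p w (j + 1) hjn (Fin.snoc x y) = mixMarg q v (j + 1) hjn (Fin.snoc x y)) :
    ∀ (x : Fin j → A) (y : A),
      mixMarg p w (j + 1) hjn (Fin.snoc x y) = mixMarg q v (j + 1) hjn (Fin.snoc x y) := by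
  intro x y
  have hj : j ≤ n := by omega
  -- the coefficient function pairing with uVec
  set g : (Fin k ⊕ Fin k) → ℝ :=
    Sum.elim (fun i => p i (Fin.castLE hjn (Fin.last j)) y)
             (fun i => q i (Fin.castLE hjn (Fin.last j)) y) with hg
  let φ : ((Fin k ⊕ Fin k) → ℝ) →ₗ[ℝ] ℝ :=
    { toFun := fun f => ∑ s, g s * f s
      map_add' := by intro f₁ f₂; simp [mul_add, Finset.sum_add_distrib]
      map_smul' := by
        intro c f
        simp only [Pi.smul_apply, smul_eq_mul, RingHom.id_apply, Finset.mul_sum]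
        exact Finset.sum_congr rfl fun s _ => by ring }
  have key : ∀ (z : Fin j → A),
      φ (uVec p q w v j hj z)
        = mixMarg p w (j + 1) hjn (Fin.snoc z y) - mixMarg q v (j + 1) hjn (Fin.snoc z y) := by
    intro z
    have hcast : ∀ t : Fin j, Fin.castLE hjn (Fin.castSucc t) = Fin.castLE hj t :=
      fun t => rfl
    simp only [φ, LinearMap.coe_mk, AddHom.coe_mk, Fintype.sum_sum_type, hg, Sum.elim_inl,
      Sum.elim_inr, uVec, mixMarg, Fin.prod_univ_castSucc, Fin.snoc_castSucc, Fin.snoc_last,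
      hcast]
    rw [sub_eq_add_neg, ← Finset.sum_neg_distrib]
    congr 1 <;> exact Finset.sum_congr rfl fun i _ => by ring
  have hle : Submodule.span ℝ (uVec p q w v j hj '' S) ≤ LinearMap.ker φ := by
    rw [Submodule.span_le]
    rintro f ⟨z, hz, rfl⟩
    simp only [SetLike.mem_coe, LinearMap.mem_ker]
    rw [key z, hS z hz y, sub_self]
  have hmem : uVec p q w v j hj x ∈ Submodule.span ℝ (uVec p q w v j hj '' S) := by
    rw [hspan]
    exact Submodule.subset_span (Set.mem_range_self x)
  have := hle hmem
  rw [LinearMap.mem_ker, key x] at this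
  linarith
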